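/- Let (Γ,δ) be a reduced power circuit containing a node of evaluation 1, let C_0 be its initial maximal chain, let L and M be compact markings on Γ with ε(L) > ε(M), and let k be an integer with 0 ≤ k ≤ ⌊2^{|C_0|+1}/3⌋. Then ε(L) ≤ ε(M) + k if and only if both ε(M|_{Γ∖C_0}) = ε(L|_{Γ∖C_0}) and ε(L|_{C_0}) ≤ ε(M|_{C_0}) + k, where N|_S denotes the marking N restricted to S (set to 0 outside S). -/

import Mathlib

/-- A *power circuit* `(Γ, δ)`: a finite dag on nodes `Fin n` with edge labels
`δ P Q ∈ {−1,0,1}` (edges are the pairs with `δ P Q ≠ 0`), acyclic, together with the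
node evaluation `ε` which satisfies the defining recursion `ε P = 2 ^ ε(Λ_P)`
(where `Λ_P = δ P ·` is the successor marking of `P` and
`ε(Λ_P) = Σ_Q δ P Q · ε Q`), and such that every node evaluates to an element of
`2^ℕ`. -/
structure PowerCircuit where
  n : ℕ
  δ : Fin n → Fin n → ℤ
  δ_range : ∀ P Q, δ P Q = -1 ∨ δ P Q = 0 ∨ δ P Q = 1
  acyclic : WellFounded fun Q P : Fin n => δ P Q ≠ 0
  ε : Fin n → ℝ
  ε_eq : ∀ P, ε P = (2 : ℝ) ^ (∑ Q, (δ P Q : ℝ) * ε Q)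
  ε_pow : ∀ P, ∃ k : ℕ, ε P = (2 : ℝ) ^ k

namespace PowerCircuit

/-- `ε(Λ_P)`, the evaluation of the successor marking of the node `P`. -/
noncomputable def lamVal (Γ : PowerCircuit) (P : Fin Γ.n) : ℝ :=
  ∑ Q, (Γ.δ P Q : ℝ) * Γ.ε Q

/-- The evaluation `ε(M) = Σ_P M(P)·ε(P)` of a marking `M`. -/
noncomputable def evalM (Γ : PowerCircuit) (M : Fin Γ.n → ℤ) : ℝ :=
  ∑ Q, (M Q : ℝ) * Γ.ε Q

/-- A marking takes values in `{−1,0,1}`. -/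
def IsMarking (Γ : PowerCircuit) (M : Fin Γ.n → ℤ) : Prop :=
  ∀ P, M P = -1 ∨ M P = 0 ∨ M P = 1

/-- A marking `M` is *compact* if for all distinct nodes `P, Q` in its support
`|ε(Λ_P) − ε(Λ_Q)| ≥ 2`. -/
def CompactM (Γ : PowerCircuit) (M : Fin Γ.n → ℤ) : Prop :=
  ∀ P Q, P ≠ Q → M P ≠ 0 → M Q ≠ 0 → 2 ≤ |Γ.lamVal P - Γ.lamVal Q|

/-- A power circuit is *reduced* if its nodes (as listed) are strictly increasing in
evaluation and all successor markings are compact. -/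
def Reduced (Γ : PowerCircuit) : Prop :=
  (∀ i j : Fin Γ.n, i < j → Γ.ε i < Γ.ε j) ∧ ∀ P, Γ.CompactM (Γ.δ P)

end PowerCircuit

lemma gaps_sum_bound (f : ℕ → ℝ) (h1 : ∀ i, f i ≤ 1)
    (hgap : ∀ i j, f i ≠ 0 → f j ≠ 0 → i < j → i + 2 ≤ j) :
    ∀ d, 3 * ∑ i ∈ Finset.range d, f i * 2 ^ i ≤ 2 ^ (d + 1) - 1 := by
  intro d
  induction d using Nat.strong_induction_on with
  | _ d ih =>
    match d with
    | 0 => norm_num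
    | 1 =>
      rw [Finset.sum_range_one]
      have := h1 0
      norm_num
      linarith
    | (d+2) =>
      rw [Finset.sum_range_succ]
      by_cases hfd : f (d+1) = 0
      · have h2 := ih (d+1) (by omega)
        rw [hfd]
        have h3 : (2:ℝ)^(d+2) ≤ 2^(d+3) := by
          apply pow_le_pow_right₀ (by norm_num) (by omega)
        ring_nf
        ring_nf at h2 h3
        linarith
      · have hmid : f d = 0 := by
          by_contra h
          have := hgap d (d+1) h hfd (by omega)
          omega
        rw [Finset.sum_range_succ, hmid]
        have h2 := ih d (by omega)
        have hb := h1 (d+1)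
        have hp : (0:ℝ) < 2^(d+1) := by positivity
        have h4 : (2:ℝ)^(d+3) = 4 * 2^(d+1) := by ring
        have h5 : (2:ℝ)^(d+1) = 2 * 2^d := by ring
        nlinarith

/-- Let `(Γ,δ)` be a reduced power circuit containing a node of
evaluation `1` (necessarily the first node), and let its initial maximal chain `C₀`
consist of the first `c` nodes (`c ≥ 1`): consecutive evaluations double along `C₀`
and `C₀` cannot be extended. Let `L, M` be compact markings with `ε(L) > ε(M)` and
`0 ≤ k ≤ ⌊2^{|C₀|+1}/3⌋`. Then `ε(L) ≤ ε(M) + k` iff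
`ε(M|_{Γ∖C₀}) = ε(L|_{Γ∖C₀})` and `ε(L|_{C₀}) ≤ ε(M|_{C₀}) + k`. -/
theorem reduced_compare_small_difference (Γ : PowerCircuit) (hred : Γ.Reduced)
    (hn : 0 < Γ.n) (hone : Γ.ε ⟨0, hn⟩ = 1)
    (c : ℕ) (hc1 : 1 ≤ c) (hcn : c ≤ Γ.n)
    (hchain : ∀ i, (h : i + 1 < c) →
      Γ.ε ⟨i + 1, h.trans_le hcn⟩ = 2 * Γ.ε ⟨i, (Nat.lt_of_succ_lt h).trans_le hcn⟩)
    (hmaxchain : ∀ h : c < Γ.n, Γ.ε ⟨c, h⟩ ≠ 2 * Γ.ε ⟨c - 1, by omega⟩)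
    (L M : Fin Γ.n → ℤ)
    (hL : Γ.IsMarking L) (hM : Γ.IsMarking M)
    (hLc : Γ.CompactM L) (hMc : Γ.CompactM M)
    (hgt : Γ.evalM M < Γ.evalM L)
    (k : ℤ) (hk0 : 0 ≤ k) (hk : k ≤ 2 ^ (c + 1) / 3) :
    Γ.evalM L ≤ Γ.evalM M + (k : ℝ) ↔
      (Γ.evalM (fun P => if c ≤ (P : ℕ) then M P else 0)
          = Γ.evalM (fun P => if c ≤ (P : ℕ) then L P else 0)
        ∧ Γ.evalM (fun P => if (P : ℕ) < c then L P else 0)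
            ≤ Γ.evalM (fun P => if (P : ℕ) < c then M P else 0) + (k : ℝ)) := by
  
  -- evaluations of chain nodes
  have heps : ∀ i (h : i < Γ.n), i < c → Γ.ε ⟨i, h⟩ = 2 ^ i := by
    intro i
    induction i with
    | zero => intro h _; exact hone.trans (by norm_num)
    | succ i ih =>
      intro h hic
      have h2 : Γ.ε ⟨i + 1, h⟩ = 2 * Γ.ε ⟨i, (Nat.lt_of_succ_lt hic).trans_le hcn⟩ :=
        hchain i hic
      rw [h2, ih _ (Nat.lt_of_succ_lt hic)]
      ring
  -- split of evaluations
  have hsplit : ∀ N : Fin Γ.n → ℤ, Γ.evalM N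
      = Γ.evalM (fun P => if c ≤ (P : ℕ) then N P else 0)
        + Γ.evalM (fun P => if (P : ℕ) < c then N P else 0) := by
    intro N
    unfold PowerCircuit.evalM
    rw [← Finset.sum_add_distrib]
    apply Finset.sum_congr rfl
    intro P _
    by_cases h : (P : ℕ) < c
    · simp [h, Nat.not_le.mpr h]
    · simp [h, Nat.le_of_not_lt h]
  -- high nodes are multiples of 2^(c+1)
  have hhigh : ∀ P : Fin Γ.n, c ≤ (P : ℕ) → ∃ e : ℕ, Γ.ε P = 2 ^ (c + 1) * 2 ^ e := by
    intro P hP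
    have hcln : c < Γ.n := lt_of_le_of_lt hP P.isLt
    obtain ⟨kc, hkc⟩ := Γ.ε_pow ⟨c, hcln⟩
    have hcm1 : Γ.ε ⟨c - 1, by omega⟩ = 2 ^ (c - 1) := heps _ _ (by omega)
    have hlt : Γ.ε ⟨c - 1, by omega⟩ < Γ.ε ⟨c, hcln⟩ := by
      apply hred.1
      simp [Fin.lt_def]
      omega
    have hkc1 : c + 1 ≤ kc := by
      rw [hcm1, hkc] at hlt
      have h1 : c - 1 < kc := by
        have := (pow_lt_pow_iff_right₀ (by norm_num : (1:ℝ) < 2)).mp hlt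
        omega
      have h2 : kc ≠ c := by
        intro hkce
        apply hmaxchain hcln
        rw [hkc, hcm1, hkce]
        have hcc : c - 1 + 1 = c := by omega
        conv_lhs => rw [← hcc]
        rw [pow_succ]
        ring
      omega
    obtain ⟨kP, hkP⟩ := Γ.ε_pow P
    have hkPc : kc ≤ kP := by
      rcases eq_or_lt_of_le hP with h | h
      · have : P = ⟨c, hcln⟩ := by
          apply Fin.ext; simp [← h]
        rw [this, hkc] at hkP
        have e1 := (pow_le_pow_iff_right₀ (by norm_num : (1:ℝ) < 2)).mp hkP.le
        have e2 := (pow_le_pow_iff_right₀ (by norm_num : (1:ℝ) < 2)).mp hkP.ge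
        omega
      · have hlt2 : Γ.ε ⟨c, hcln⟩ < Γ.ε P := by
          apply hred.1
          simp [Fin.lt_def]
          omega
        rw [hkc, hkP] at hlt2
        have := (pow_lt_pow_iff_right₀ (by norm_num : (1:ℝ) < 2)).mp hlt2
        omega
    refine ⟨kP - (c + 1), ?_⟩
    rw [hkP, ← pow_add]
    congr 1
    omega
  -- lamVal on the chain equals the index
  have hlam : ∀ i (h : i < Γ.n), i < c → Γ.lamVal ⟨i, h⟩ = i := by
    intro i h hic
    have h1 : Γ.ε ⟨i, h⟩ = (2 : ℝ) ^ Γ.lamVal ⟨i, h⟩ := Γ.ε_eq ⟨i, h⟩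
    have h2 : Γ.ε ⟨i, h⟩ = (2 : ℝ) ^ ((i : ℝ)) := by
      rw [heps i h hic, Real.rpow_natCast]
    rw [h1] at h2
    have e1 := (Real.rpow_le_rpow_left_iff (by norm_num : (1:ℝ) < 2)).mp h2.le
    have e2 := (Real.rpow_le_rpow_left_iff (by norm_num : (1:ℝ) < 2)).mp h2.ge
    linarith
  -- bound on evaluation of compact markings restricted to the chain
  have hlowbound : ∀ N : Fin Γ.n → ℤ, Γ.IsMarking N → Γ.CompactM N →
      3 * |Γ.evalM (fun P => if (P : ℕ) < c then N P else 0)| ≤ 2 ^ (c + 1) - 1 := by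
    intro N hNm hNc
    set f : ℕ → ℝ := fun i => if h : i < c then |((N ⟨i, h.trans_le hcn⟩ : ℤ) : ℝ)| else 0
      with hf
    have h1 : ∀ i, f i ≤ 1 := by
      intro i
      simp only [hf]
      split
      · rcases hNm ⟨i, _⟩ with h | h | h <;> rw [h] <;> norm_num
      · norm_num
    have hgap : ∀ i j, f i ≠ 0 → f j ≠ 0 → i < j → i + 2 ≤ j := by
      intro i j hfi hfj hij
      simp only [hf] at hfi hfj
      by_cases hi : i < c
      · by_cases hj : j < c
        · rw [dif_pos hi] at hfi
          rw [dif_pos hj] at hfj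
          have hNi : N ⟨i, hi.trans_le hcn⟩ ≠ 0 := by
            intro h; rw [h] at hfi; simp at hfi
          have hNj : N ⟨j, hj.trans_le hcn⟩ ≠ 0 := by
            intro h; rw [h] at hfj; simp at hfj
          have hne : (⟨i, hi.trans_le hcn⟩ : Fin Γ.n) ≠ ⟨j, hj.trans_le hcn⟩ := by
            intro h
            have := Fin.mk.injEq i (hi.trans_le hcn) j (hj.trans_le hcn) ▸ h
            obtain rfl : i = j := congrArg Fin.val h
            omega
          have := hNc _ _ hne hNi hNj
          rw [hlam i _ hi, hlam j _ hj] at this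
          rw [abs_sub_comm, abs_of_nonneg (by
            have : (i:ℝ) ≤ j := by exact_mod_cast hij.le
            linarith)] at this
          have : (i:ℝ) + 2 ≤ (j:ℝ) := by linarith
          exact_mod_cast this
        · rw [dif_neg hj] at hfj; simp at hfj
      · rw [dif_neg hi] at hfi; simp at hfi
    have hbound := gaps_sum_bound f h1 hgap c
    -- relate evalM of the restricted marking to the range sum
    have hconv : |Γ.evalM (fun P => if (P : ℕ) < c then N P else 0)|
        ≤ ∑ i ∈ Finset.range c, f i * 2 ^ i := by
      set g : ℕ → ℝ := fun i =>
        if h : i < Γ.n then (((if i < c then N ⟨i, h⟩ else 0 : ℤ)) : ℝ) * Γ.ε ⟨i, h⟩ else 0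
        with hg
      have e1 : Γ.evalM (fun P => if (P : ℕ) < c then N P else 0)
          = ∑ i ∈ Finset.range Γ.n, g i := by
        rw [← Fin.sum_univ_eq_sum_range]
        unfold PowerCircuit.evalM
        apply Finset.sum_congr rfl
        intro P _
        simp only [hg, P.isLt, dif_pos, Fin.eta]
      have e2 : ∑ i ∈ Finset.range Γ.n, g i = ∑ i ∈ Finset.range c, g i := by
        symm
        apply Finset.sum_subset (Finset.range_subset_range.mpr hcn)
        intro x hx hxc
        simp only [Finset.mem_range] at hx hxc
        simp only [hg, dif_pos hx, if_neg hxc]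
        simp
      rw [e1, e2]
      refine (Finset.abs_sum_le_sum_abs _ _).trans ?_
      apply Finset.sum_le_sum
      intro i hi
      simp only [Finset.mem_range] at hi
      have hin : i < Γ.n := hi.trans_le hcn
      simp only [hg, dif_pos hin, if_pos hi, hf, dif_pos hi]
      rw [heps i hin hi, abs_mul, abs_of_nonneg (by positivity : (0:ℝ) ≤ (2:ℝ)^i)]
    linarith
  -- evaluations of markings restricted to high nodes are multiples of 2^(c+1)
  have hhighint : ∀ N : Fin Γ.n → ℤ, ∃ m : ℤ,
      Γ.evalM (fun P => if c ≤ (P : ℕ) then N P else 0) = (m : ℝ) * 2 ^ (c + 1) := by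
    intro N
    choose e he using hhigh
    refine ⟨∑ P : Fin Γ.n, if h : c ≤ (P : ℕ) then N P * 2 ^ (e P h) else 0, ?_⟩
    unfold PowerCircuit.evalM
    push_cast
    rw [Finset.sum_mul]
    apply Finset.sum_congr rfl
    intro P _
    by_cases h : c ≤ (P : ℕ)
    · rw [dif_pos h, if_pos h, he P h]
      push_cast
      ring
    · rw [dif_neg h, if_neg h]
      simp
  -- the two key integer bounds
  have h3k : 3 * k ≤ 2 ^ (c + 1) - 1 := by
    have hnd : ¬ (3 : ℤ) ∣ 2 ^ (c + 1) := by
      intro hdvd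
      have := Int.prime_three.dvd_of_dvd_pow hdvd
      norm_num at this
    omega
  have h3kR : 3 * (k : ℝ) ≤ 2 ^ (c + 1) - 1 := by exact_mod_cast h3k
  -- assemble
  obtain ⟨mL, hmL⟩ := hhighint L
  obtain ⟨mM, hmM⟩ := hhighint M
  have hLl := hlowbound L hL hLc
  have hMl := hlowbound M hM hMc
  have hsL := hsplit L
  have hsM := hsplit M
  set Lh := Γ.evalM (fun P => if c ≤ (P : ℕ) then L P else 0) with hLh
  set Mh := Γ.evalM (fun P => if c ≤ (P : ℕ) then M P else 0) with hMh
  set Ll := Γ.evalM (fun P => if (P : ℕ) < c then L P else 0) with hLl'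
  set Ml := Γ.evalM (fun P => if (P : ℕ) < c then M P else 0) with hMl'
  have hpow : (0:ℝ) < 2 ^ (c + 1) := by positivity
  have bLl1 : Ll ≤ |Ll| := le_abs_self _
  have bLl2 : -|Ll| ≤ Ll := neg_abs_le _
  have bMl1 : Ml ≤ |Ml| := le_abs_self _
  have bMl2 : -|Ml| ≤ Ml := neg_abs_le _
  constructor
  · intro hle
    rw [hsL, hsM] at hle hgt
    have hdiff : Lh - Mh = ((mL - mM : ℤ) : ℝ) * 2 ^ (c + 1) := by
      push_cast
      rw [hmL, hmM]
      ring
    have hup : ((mL - mM : ℤ) : ℝ) * 2 ^ (c + 1) < 1 * 2 ^ (c + 1) := by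
      rw [← hdiff, one_mul]
      linarith
    have hdn : (-1 : ℝ) * 2 ^ (c + 1) < ((mL - mM : ℤ) : ℝ) * 2 ^ (c + 1) := by
      rw [← hdiff]
      linarith
    have h1 : ((mL - mM : ℤ) : ℝ) < 1 := (mul_lt_mul_iff_of_pos_right hpow).mp hup
    have h2 : (-1 : ℝ) < ((mL - mM : ℤ) : ℝ) := (mul_lt_mul_iff_of_pos_right hpow).mp hdn
    have h1' : (mL - mM : ℤ) < 1 := by exact_mod_cast h1
    have h2' : (-1 : ℤ) < mL - mM := by exact_mod_cast h2
    have hz : mL = mM := by omega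
    have hMhLh : Mh = Lh := by
      rw [hmL, hmM, hz]
    exact ⟨hMhLh, by linarith [hMhLh]⟩
  · rintro ⟨h1, h2⟩
    rw [hsL, hsM, ← h1]
    linarith
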